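/- Let P and Q be orthogonal projections on a finite-dimensional real inner product space W. Then the operator !(P,Q) := 2P(P+Q)⁺Q is the orthogonal projection of W onto Range(P) ∩ Range(Q). -/

import Mathlib

/-- `G` is the Moore-Penrose pseudo-inverse of `L` (Penrose conditions;
adjoint-symmetry of `L ∘ G` and `G ∘ L` expressed via `IsSymmetric`). -/
def IsMoorePenrose {V : Type*} [NormedAddCommGroup V] [InnerProductSpace ℝ V]
    (L G : V →ₗ[ℝ] V) : Prop :=
  L ∘ₗ (G ∘ₗ L) = L ∧ G ∘ₗ (L ∘ₗ G) = G ∧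
  (L ∘ₗ G).IsSymmetric ∧ (G ∘ₗ L).IsSymmetric

theorem parallelSum_of_projections {W : Type*} [NormedAddCommGroup W] [InnerProductSpace ℝ W]
    [FiniteDimensional ℝ W] (P Q : W →ₗ[ℝ] W)
    (hP : P.IsSymmetric) (hQ : Q.IsSymmetric)
    (hP2 : P ∘ₗ P = P) (hQ2 : Q ∘ₗ Q = Q)
    (G : W →ₗ[ℝ] W) (hG : IsMoorePenrose (P + Q) G) :
    ∀ w : W, ((2 : ℝ) • (P ∘ₗ (G ∘ₗ Q))) w =
      (Submodule.orthogonalProjectionOnto (LinearMap.range P ⊓ LinearMap.range Q) w : W) := by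
  obtain ⟨h1, h2, h3, h4⟩ := hG
  set S : W →ₗ[ℝ] W := P + Q with hSdef
  have hSsym : S.IsSymmetric := hP.add hQ
  have adjOf : ∀ T : W →ₗ[ℝ] W, T.IsSymmetric → LinearMap.adjoint T = T := fun T h =>
    LinearMap.isSelfAdjoint_iff'.mp ((LinearMap.isSymmetric_iff_isSelfAdjoint T).mp h)
  have aS : LinearMap.adjoint S = S := adjOf S hSsym
  have aQ : LinearMap.adjoint Q = Q := adjOf Q hQ
  -- S ∘ adjoint G = G ∘ S
  have hSGadj : S ∘ₗ LinearMap.adjoint G = G ∘ₗ S := by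
    have := adjOf _ h4
    rwa [LinearMap.adjoint_comp, aS] at this
  -- (G∘S)∘S = S
  have c1 : (G ∘ₗ S) ∘ₗ S = S := by
    have := congrArg LinearMap.adjoint h1
    rwa [LinearMap.adjoint_comp, adjOf _ h4, aS] at this
  have h1' : (S ∘ₗ G) ∘ₗ S = S := by rw [LinearMap.comp_assoc]; exact h1
  -- S∘(S∘G) = S
  have c2 : S ∘ₗ (S ∘ₗ G) = S := by
    have := congrArg LinearMap.adjoint h1'
    rwa [LinearMap.adjoint_comp, adjOf _ h3, aS] at this
  have hComm : S ∘ₗ G = G ∘ₗ S := by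
    conv_lhs => rw [← c1]
    simp only [LinearMap.comp_assoc]
    rw [c2]
  -- (S∘G) ∘ adjoint G = adjoint G
  have e1 : (S ∘ₗ G) ∘ₗ LinearMap.adjoint G = LinearMap.adjoint G := by
    have := congrArg LinearMap.adjoint h2
    rwa [LinearMap.adjoint_comp, adjOf _ h3] at this
  have aG : LinearMap.adjoint G = G := by
    conv_lhs => rw [← e1, hComm, LinearMap.comp_assoc, hSGadj, ← hComm]
    exact h2
  have hGsym : G.IsSymmetric :=
    (LinearMap.isSymmetric_iff_isSelfAdjoint G).mpr (LinearMap.isSelfAdjoint_iff'.mpr aG)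
  -- kernel of S is contained in kernels of P and Q
  have hker : ∀ x : W, S x = 0 → P x = 0 ∧ Q x = 0 := by
    intro x hx
    have hPxx : (inner ℝ (P x) (P x) : ℝ) = inner ℝ (P x) x := by
      have h := hP x (P x)
      have hpp : P (P x) = P x := LinearMap.ext_iff.mp hP2 x
      rw [hpp] at h
      rw [h, real_inner_comm]
    have hQxx : (inner ℝ (Q x) (Q x) : ℝ) = inner ℝ (Q x) x := by
      have h := hQ x (Q x)
      have hqq : Q (Q x) = Q x := LinearMap.ext_iff.mp hQ2 x
      rw [hqq] at h
      rw [h, real_inner_comm]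
    have hsum : (inner ℝ (P x) x : ℝ) + inner ℝ (Q x) x = 0 := by
      have hx' : (inner ℝ (S x) x : ℝ) = 0 := by rw [hx]; simp
      have : S x = P x + Q x := by simp [hSdef]
      rw [this, inner_add_left] at hx'
      exact hx'
    have hp0 : (0:ℝ) ≤ inner ℝ (P x) x := by rw [← hPxx]; exact real_inner_self_nonneg
    have hq0 : (0:ℝ) ≤ inner ℝ (Q x) x := by rw [← hQxx]; exact real_inner_self_nonneg
    have hpz : (inner ℝ (P x) (P x) : ℝ) = 0 := by rw [hPxx]; linarith
    have hqz : (inner ℝ (Q x) (Q x) : ℝ) = 0 := by rw [hQxx]; linarith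
    exact ⟨inner_self_eq_zero.mp hpz, inner_self_eq_zero.mp hqz⟩
  -- P∘(G∘S) = P and Q∘(G∘S) = Q
  have hPifix : ∀ x : W, P (G (S x)) = P x ∧ Q (G (S x)) = Q x := by
    intro x
    have h1x : S (G (S x)) = S x := by
      have := LinearMap.ext_iff.mp h1 x
      simpa using this
    have h0 : S (x - G (S x)) = 0 := by rw [map_sub, h1x, sub_self]
    obtain ⟨hp, hq⟩ := hker _ h0
    rw [map_sub, sub_eq_zero] at hp hq
    exact ⟨hp.symm, hq.symm⟩
  have hQGS : Q ∘ₗ (G ∘ₗ S) = Q := LinearMap.ext fun x => by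
    simpa using (hPifix x).2
  -- (G∘S)∘Q = Q
  have hPiQ : (G ∘ₗ S) ∘ₗ Q = Q := by
    have := congrArg LinearMap.adjoint hQGS
    rwa [LinearMap.adjoint_comp, adjOf _ h4, aQ] at this
  -- pointwise versions
  have hAp : ∀ x : W, P (G (Q x)) + Q (G (Q x)) = Q x := by
    intro x
    have hA : (S ∘ₗ G) ∘ₗ Q = Q := by rw [hComm]; exact hPiQ
    have := LinearMap.ext_iff.mp hA x
    simpa [hSdef, LinearMap.add_apply] using this
  have hBp : ∀ x : W, Q (G (P x)) + Q (G (Q x)) = Q x := by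
    intro x
    have := LinearMap.ext_iff.mp hQGS x
    have hsx : S x = P x + Q x := by simp [hSdef]
    simpa [hsx, map_add] using this
  have keyp : ∀ x : W, P (G (Q x)) = Q (G (P x)) := by
    intro x
    have h := add_right_cancel (b := Q (G (Q x))) (a := P (G (Q x))) (c := Q (G (P x)))
    apply h
    rw [hAp x, hBp x]
  -- elements of the ranges are fixed points
  have hPfix : ∀ m : W, m ∈ LinearMap.range P → P m = m := by
    rintro m ⟨a, rfl⟩
    exact LinearMap.ext_iff.mp hP2 a
  have hQfix : ∀ m : W, m ∈ LinearMap.range Q → Q m = m := by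
    rintro m ⟨a, rfl⟩
    exact LinearMap.ext_iff.mp hQ2 a
  intro w
  have hgoal : ((2 : ℝ) • (P ∘ₗ (G ∘ₗ Q))) w = (2:ℝ) • P (G (Q w)) := by
    simp
  rw [hgoal]
  rw [← Submodule.starProjection_apply]
  refine (Submodule.eq_starProjection_of_mem_of_inner_eq_zero ?_ ?_).symm
  · refine Submodule.mem_inf.mpr ⟨⟨(2:ℝ) • G (Q w), by simp⟩, ⟨(2:ℝ) • G (P w), ?_⟩⟩
    rw [map_smul, ← keyp w]
  · intro m hm
    obtain ⟨hmP, hmQ⟩ := Submodule.mem_inf.mp hm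
    have hPm := hPfix m hmP
    have hQm := hQfix m hmQ
    have hGm : G (S m) = m := by
      have := LinearMap.ext_iff.mp hPiQ m
      simp only [LinearMap.comp_apply] at this
      rwa [hQm] at this
    have hSm : S m = (2:ℝ) • m := by
      have : S m = P m + Q m := by simp [hSdef]
      rw [this, hPm, hQm, two_smul]
    have hGm2 : G m = (2⁻¹:ℝ) • m := by
      have h2m : (2:ℝ) • G m = m := by
        rw [← map_smul, ← hSm, hGm]
      conv_rhs => rw [← h2m]
      rw [smul_smul]
      norm_num
    have hTm : (2:ℝ) • P (G (Q m)) = m := by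
      rw [hQm, hGm2, map_smul, smul_smul]
      norm_num [hPm]
    have hsym : (inner ℝ ((2:ℝ) • P (G (Q w))) m : ℝ) = inner ℝ w m := by
      calc (inner ℝ ((2:ℝ) • P (G (Q w))) m : ℝ)
          = (2:ℝ) * inner ℝ (P (G (Q w))) m := by rw [real_inner_smul_left]
        _ = (2:ℝ) * inner ℝ (G (Q w)) (P m) := by rw [hP]
        _ = (2:ℝ) * inner ℝ (Q w) (G (P m)) := by rw [hGsym]
        _ = (2:ℝ) * inner ℝ w (Q (G (P m))) := by rw [hQ]
        _ = (2:ℝ) * inner ℝ w (P (G (Q m))) := by rw [← keyp m]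
        _ = inner ℝ w ((2:ℝ) • P (G (Q m))) := by rw [real_inner_smul_right]
        _ = inner ℝ w m := by rw [hTm]
    rw [inner_sub_left, hsym, sub_self]
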